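/- Let G1, G2 ∈ ℝ^{n×n} be symmetric positive definite matrices such that G1 − G2 is also symmetric positive definite. Then for every i = 1, 2, …, n: λ_i(chol(G1)) > λ_i(chol(G2)) and λ_i(chol(G1⁻¹)) < λ_i(chol(G2⁻¹)). -/

import Mathlib

open Matrix

noncomputable section

/-- Euclidean norm of a real vector. -/
def euclNorm {m : ℕ} (x : Fin m → ℝ) : ℝ := Real.sqrt (∑ k, x k ^ 2)

/-- The lattice vector `A z` for an integer vector `z`. -/
def latticeVec {m n : ℕ} (A : Matrix (Fin m) (Fin n) ℝ) (z : Fin n → ℤ) : Fin m → ℝ :=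
  A.mulVec fun k => (z k : ℝ)

/-- The `i`-th successive minimum of the lattice generated by `A`: the smallest `r ≥ 0` such
that the closed ball of radius `r` centered at the origin contains `i` linearly independent
lattice vectors. -/
def succMin {m n : ℕ} (A : Matrix (Fin m) (Fin n) ℝ) (i : ℕ) : ℝ :=
  sInf {r : ℝ | 0 ≤ r ∧ ∃ v : Fin i → (Fin n → ℤ),
    LinearIndependent ℝ (fun j => latticeVec A (v j)) ∧
    ∀ j, euclNorm (latticeVec A (v j)) ≤ r}

/-- `R` is the Cholesky factor of `G`: `R` is upper triangular with positive diagonal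
entries and `Rᵀ * R = G`. -/
def IsCholesky {n : ℕ} (G R : Matrix (Fin n) (Fin n) ℝ) : Prop :=
  R.BlockTriangular id ∧ (∀ j, 0 < R j j) ∧ Rᵀ * R = G

namespace SMAux

/-- The defining set in `succMin`. -/
def T {n : ℕ} (A : Matrix (Fin n) (Fin n) ℝ) (i : ℕ) : Set ℝ :=
  {r : ℝ | 0 ≤ r ∧ ∃ v : Fin i → (Fin n → ℤ),
    LinearIndependent ℝ (fun j => latticeVec A (v j)) ∧
    ∀ j, euclNorm (latticeVec A (v j)) ≤ r}

lemma succMin_eq {n : ℕ} (A : Matrix (Fin n) (Fin n) ℝ) (i : ℕ) :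
    succMin A i = sInf (T A i) := rfl

lemma euclNorm_nonneg {m : ℕ} (x : Fin m → ℝ) : 0 ≤ euclNorm x := Real.sqrt_nonneg _

lemma sum_sq_mulVec {n : ℕ} (A : Matrix (Fin n) (Fin n) ℝ) (y : Fin n → ℝ) :
    ∑ k, (A *ᵥ y) k ^ 2 = y ⬝ᵥ ((Aᵀ * A) *ᵥ y) := by
  rw [← Matrix.mulVec_mulVec, Matrix.dotProduct_mulVec, Matrix.vecMul_transpose]
  simp [dotProduct, sq]

/-- For a Cholesky factor `R` of `G`, the squared norm of `R z` is the `G`-quadratic form. -/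
lemma euclNorm_sq {n : ℕ} {G R : Matrix (Fin n) (Fin n) ℝ} (hR : IsCholesky G R)
    (z : Fin n → ℤ) :
    euclNorm (latticeVec R z) ^ 2 =
      (fun k => ((z k : ℝ))) ⬝ᵥ (G *ᵥ fun k => ((z k : ℝ))) := by
  have h0 : euclNorm (latticeVec R z) ^ 2 = ∑ k, (latticeVec R z) k ^ 2 :=
    Real.sq_sqrt (Finset.sum_nonneg fun k _ => sq_nonneg _)
  rw [h0, show latticeVec R z = R *ᵥ (fun k => ((z k : ℝ))) from rfl, sum_sq_mulVec, hR.2.2]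

lemma exists_quad_lb {n : ℕ} {H : Matrix (Fin n) (Fin n) ℝ} (hH : H.PosDef) :
    ∃ δ : ℝ, 0 < δ ∧ ∀ x : Fin n → ℝ, δ * (∑ k, x k ^ 2) ≤ x ⬝ᵥ (H *ᵥ x) := by
  have hcont : Continuous fun y : Fin n → ℝ => y ⬝ᵥ (H *ᵥ y) := by
    simp only [dotProduct, Matrix.mulVec]
    exact continuous_finset_sum _ fun k _ =>
      (continuous_apply k).mul (continuous_finset_sum _ fun j _ =>
        (continuous_const.mul (continuous_apply j)))
  rcases Nat.eq_zero_or_pos n with hn | hn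
  · subst hn
    exact ⟨1, one_pos, fun x => by simp [dotProduct]⟩
  haveI : Nonempty (Fin n) := ⟨⟨0, hn⟩⟩
  have hsc : IsCompact (Metric.sphere (0 : EuclideanSpace ℝ (Fin n)) 1) := isCompact_sphere _ _
  have hsne : (Metric.sphere (0 : EuclideanSpace ℝ (Fin n)) 1).Nonempty :=
    NormedSpace.sphere_nonempty.mpr zero_le_one
  have hcont' : Continuous fun y : EuclideanSpace ℝ (Fin n) => (y : Fin n → ℝ) ⬝ᵥ (H *ᵥ y) :=
    hcont.comp (PiLp.continuous_ofLp 2 fun _ : Fin n => ℝ)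
  obtain ⟨u, hu, hmin⟩ := hsc.exists_isMinOn hsne hcont'.continuousOn
  have hunorm : ‖u‖ = 1 := by simpa using hu
  have hune : (u : Fin n → ℝ) ≠ 0 := by
    intro h
    rw [show u = 0 from (WithLp.ofLp_eq_zero (p := 2)).mp h] at hunorm
    simp at hunorm
  have hδ : 0 < (u : Fin n → ℝ) ⬝ᵥ (H *ᵥ u) := by
    have := hH.dotProduct_mulVec_pos hune
    simpa using this
  refine ⟨_, hδ, fun x => ?_⟩
  by_cases hx : x = 0
  · simp [hx]
  set s : ℝ := Real.sqrt (∑ k, x k ^ 2) with hs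
  have hsumpos : 0 < ∑ k, x k ^ 2 := by
    have h1 : ∃ k, x k ≠ 0 := by
      by_contra h
      push_neg at h
      exact hx (funext h)
    obtain ⟨k, hk⟩ := h1
    have : 0 < x k ^ 2 := by positivity
    exact lt_of_lt_of_le this (Finset.single_le_sum (fun j _ => sq_nonneg (x j)) (Finset.mem_univ k))
  have hspos : 0 < s := Real.sqrt_pos.mpr hsumpos
  have hs2 : s ^ 2 = ∑ k, x k ^ 2 := Real.sq_sqrt hsumpos.le
  set X : EuclideanSpace ℝ (Fin n) := (WithLp.equiv 2 (Fin n → ℝ)).symm x with hX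
  have hmem : s⁻¹ • X ∈ Metric.sphere (0 : EuclideanSpace ℝ (Fin n)) 1 := by
    have hXnorm : ‖X‖ = s := by
      rw [EuclideanSpace.norm_eq]
      congr 1
      exact Finset.sum_congr rfl fun k _ => by rw [Real.norm_eq_abs, sq_abs]; rfl
    have h1 : ‖s⁻¹ • X‖ = 1 := by
      rw [norm_smul, hXnorm, Real.norm_eq_abs, abs_of_pos (inv_pos.mpr hspos),
        inv_mul_cancel₀ hspos.ne']
    simpa using h1
  have h2 := (isMinOn_iff.mp hmin) _ hmem
  have h3 : ((s⁻¹ • X : EuclideanSpace ℝ (Fin n)) : Fin n → ℝ) ⬝ᵥ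
      (H *ᵥ (s⁻¹ • X : EuclideanSpace ℝ (Fin n))) = s⁻¹ ^ 2 * (x ⬝ᵥ (H *ᵥ x)) := by
    have h4 : ((s⁻¹ • X : EuclideanSpace ℝ (Fin n)) : Fin n → ℝ) = s⁻¹ • x := rfl
    rw [h4, Matrix.mulVec_smul, dotProduct_smul, smul_dotProduct]
    simp [smul_eq_mul]; ring
  rw [h3] at h2
  have h4 := mul_le_mul_of_nonneg_left h2 (le_of_lt (by positivity : (0:ℝ) < s ^ 2))
  calc (u : Fin n → ℝ) ⬝ᵥ (H *ᵥ u) * (∑ k, x k ^ 2)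
      = s ^ 2 * ((u : Fin n → ℝ) ⬝ᵥ (H *ᵥ u)) := by rw [hs2]; ring
    _ ≤ s ^ 2 * (s⁻¹ ^ 2 * (x ⬝ᵥ (H *ᵥ x))) := h4
    _ = x ⬝ᵥ (H *ᵥ x) := by field_simp

lemma exists_quad_ub {n : ℕ} (H : Matrix (Fin n) (Fin n) ℝ) :
    ∃ M : ℝ, 0 < M ∧ ∀ x : Fin n → ℝ, x ⬝ᵥ (H *ᵥ x) ≤ M * (∑ k, x k ^ 2) := by
  have hcont : Continuous fun y : Fin n → ℝ => y ⬝ᵥ (H *ᵥ y) := by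
    simp only [dotProduct, Matrix.mulVec]
    exact continuous_finset_sum _ fun k _ =>
      (continuous_apply k).mul (continuous_finset_sum _ fun j _ =>
        (continuous_const.mul (continuous_apply j)))
  rcases Nat.eq_zero_or_pos n with hn | hn
  · subst hn
    exact ⟨1, one_pos, fun x => by simp [dotProduct]⟩
  haveI : Nonempty (Fin n) := ⟨⟨0, hn⟩⟩
  have hsc : IsCompact (Metric.sphere (0 : EuclideanSpace ℝ (Fin n)) 1) := isCompact_sphere _ _
  have hsne : (Metric.sphere (0 : EuclideanSpace ℝ (Fin n)) 1).Nonempty :=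
    NormedSpace.sphere_nonempty.mpr zero_le_one
  have hcont' : Continuous fun y : EuclideanSpace ℝ (Fin n) => (y : Fin n → ℝ) ⬝ᵥ (H *ᵥ y) :=
    hcont.comp (PiLp.continuous_ofLp 2 fun _ : Fin n => ℝ)
  obtain ⟨u, hu, hmax⟩ := hsc.exists_isMaxOn hsne hcont'.continuousOn
  set M : ℝ := max ((u : Fin n → ℝ) ⬝ᵥ (H *ᵥ u)) 1 with hM
  refine ⟨M, lt_of_lt_of_le one_pos (le_max_right _ _), fun x => ?_⟩
  by_cases hx : x = 0
  · simp [hx]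
  set s : ℝ := Real.sqrt (∑ k, x k ^ 2) with hs
  have hsumpos : 0 < ∑ k, x k ^ 2 := by
    have h1 : ∃ k, x k ≠ 0 := by
      by_contra h
      push_neg at h
      exact hx (funext h)
    obtain ⟨k, hk⟩ := h1
    have : 0 < x k ^ 2 := by positivity
    exact lt_of_lt_of_le this (Finset.single_le_sum (fun j _ => sq_nonneg (x j)) (Finset.mem_univ k))
  have hspos : 0 < s := Real.sqrt_pos.mpr hsumpos
  have hs2 : s ^ 2 = ∑ k, x k ^ 2 := Real.sq_sqrt hsumpos.le
  set X : EuclideanSpace ℝ (Fin n) := (WithLp.equiv 2 (Fin n → ℝ)).symm x with hX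
  have hmem : s⁻¹ • X ∈ Metric.sphere (0 : EuclideanSpace ℝ (Fin n)) 1 := by
    have hXnorm : ‖X‖ = s := by
      rw [EuclideanSpace.norm_eq]
      congr 1
      exact Finset.sum_congr rfl fun k _ => by rw [Real.norm_eq_abs, sq_abs]; rfl
    have h1 : ‖s⁻¹ • X‖ = 1 := by
      rw [norm_smul, hXnorm, Real.norm_eq_abs, abs_of_pos (inv_pos.mpr hspos),
        inv_mul_cancel₀ hspos.ne']
    simpa using h1
  have h2 := (isMaxOn_iff.mp hmax) _ hmem
  have h3 : ((s⁻¹ • X : EuclideanSpace ℝ (Fin n)) : Fin n → ℝ) ⬝ᵥ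
      (H *ᵥ (s⁻¹ • X : EuclideanSpace ℝ (Fin n))) = s⁻¹ ^ 2 * (x ⬝ᵥ (H *ᵥ x)) := by
    have h4 : ((s⁻¹ • X : EuclideanSpace ℝ (Fin n)) : Fin n → ℝ) = s⁻¹ • x := rfl
    rw [h4, Matrix.mulVec_smul, dotProduct_smul, smul_dotProduct]
    simp [smul_eq_mul]; ring
  rw [h3] at h2
  have h5 : (u : Fin n → ℝ) ⬝ᵥ (H *ᵥ u) ≤ M := le_max_left _ _
  have h6 := mul_le_mul_of_nonneg_left (h2.trans h5) (le_of_lt (by positivity : (0:ℝ) < s ^ 2))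
  calc x ⬝ᵥ (H *ᵥ x) = s ^ 2 * (s⁻¹ ^ 2 * (x ⬝ᵥ (H *ᵥ x))) := by field_simp
    _ ≤ s ^ 2 * M := h6
    _ = M * (∑ k, x k ^ 2) := by rw [hs2]; ring

/-- There is a uniform ratio `c > 1` between the quadratic forms. -/
lemma exists_ratio {n : ℕ} {G1 G2 : Matrix (Fin n) (Fin n) ℝ}
    (hdiff : (G1 - G2).PosDef) :
    ∃ c : ℝ, 1 < c ∧ ∀ y : Fin n → ℝ, c * (y ⬝ᵥ (G2 *ᵥ y)) ≤ y ⬝ᵥ (G1 *ᵥ y) := by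
  obtain ⟨δ, hδ, hlb⟩ := exists_quad_lb hdiff
  obtain ⟨M, hM, hub⟩ := exists_quad_ub G2
  refine ⟨1 + δ / M, lt_add_of_pos_right 1 (div_pos hδ hM), fun y => ?_⟩
  have h1 : y ⬝ᵥ ((G1 - G2) *ᵥ y) = y ⬝ᵥ (G1 *ᵥ y) - y ⬝ᵥ (G2 *ᵥ y) := by
    simp [Matrix.sub_mulVec, dotProduct_sub]
  have hlb' := hlb y
  rw [h1] at hlb'
  have e0 : (1 + δ / M) * (y ⬝ᵥ (G2 *ᵥ y)) = y ⬝ᵥ (G2 *ᵥ y) + δ / M * (y ⬝ᵥ (G2 *ᵥ y)) := by ring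
  have e1 : δ / M * (y ⬝ᵥ (G2 *ᵥ y)) ≤ δ / M * (M * ∑ k, y k ^ 2) :=
    mul_le_mul_of_nonneg_left (hub y) (by positivity)
  have e2 : δ / M * (M * ∑ k, y k ^ 2) = δ * ∑ k, y k ^ 2 := by field_simp
  linarith

/-- The Cholesky factor is injective as a linear map on vectors. -/
lemma chol_mulVec_injective {n : ℕ} {G R : Matrix (Fin n) (Fin n) ℝ} (hR : IsCholesky G R) :
    Function.Injective R.mulVec := by
  have hdet : IsUnit R.det := by
    rw [Matrix.det_of_upperTriangular hR.1]
    exact isUnit_iff_ne_zero.mpr (Finset.prod_pos (fun j _ => hR.2.1 j)).ne'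
  intro x y hxy
  have h := congrArg (fun w => R⁻¹ *ᵥ w) hxy
  simpa [Matrix.mulVec_mulVec, Matrix.nonsing_inv_mul _ hdet, Matrix.one_mulVec] using h

/-- Transfer of linear independence of lattice vectors between two nonsingular matrices. -/
lemma li_transfer {n i : ℕ} {G1 R1 G2 R2 : Matrix (Fin n) (Fin n) ℝ}
    (hR1 : IsCholesky G1 R1) (hR2 : IsCholesky G2 R2) (v : Fin i → (Fin n → ℤ))
    (h : LinearIndependent ℝ (fun j => latticeVec R1 (v j))) :
    LinearIndependent ℝ (fun j => latticeVec R2 (v j)) := by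
  have base : LinearIndependent ℝ (fun j => (fun k => ((v j k : ℝ)))) :=
    LinearIndependent.of_comp R1.mulVecLin h
  have h2 : LinearMap.ker R2.mulVecLin = ⊥ :=
    LinearMap.ker_eq_bot.mpr (chol_mulVec_injective hR2)
  exact base.map' R2.mulVecLin h2

/-- The defining set of `succMin` is nonempty when `i ≤ n`. -/
lemma T_nonempty {n i : ℕ} (hin : i ≤ n) {G R : Matrix (Fin n) (Fin n) ℝ}
    (hR : IsCholesky G R) : (T R i).Nonempty := by
  set v : Fin i → (Fin n → ℤ) := fun j => Pi.single (Fin.castLE hin j) 1 with hv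
  have hcast : ∀ j, (fun k => ((v j k : ℝ))) = (Pi.single (Fin.castLE hin j) (1 : ℝ) : Fin n → ℝ) := by
    intro j
    funext k
    rcases eq_or_ne k (Fin.castLE hin j) with h | h <;>
      simp [hv, Pi.single_apply, h]
  have base : LinearIndependent ℝ (fun j : Fin i => (Pi.single (Fin.castLE hin j) (1 : ℝ) : Fin n → ℝ)) := by
    have h1 := (Pi.basisFun ℝ (Fin n)).linearIndependent.comp (Fin.castLE hin) (Fin.castLE_injective hin)
    have h2 : (⇑(Pi.basisFun ℝ (Fin n)) ∘ Fin.castLE hin) =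
        fun j : Fin i => (Pi.single (Fin.castLE hin j) (1 : ℝ) : Fin n → ℝ) := by
      funext j
      simp [Pi.basisFun_apply]
    rwa [h2] at h1
  have hker : LinearMap.ker R.mulVecLin = ⊥ :=
    LinearMap.ker_eq_bot.mpr (chol_mulVec_injective hR)
  have li : LinearIndependent ℝ (fun j => latticeVec R (v j)) := by
    have := base.map' R.mulVecLin hker
    have heq : (R.mulVecLin ∘ fun j : Fin i => (Pi.single (Fin.castLE hin j) (1 : ℝ) : Fin n → ℝ)) =
        fun j => latticeVec R (v j) := by
      funext j
      show R *ᵥ _ = R *ᵥ _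
      rw [hcast j]
    rwa [heq] at this
  exact ⟨∑ j, euclNorm (latticeVec R (v j)),
    Finset.sum_nonneg fun j _ => euclNorm_nonneg _, v, li,
    fun j => Finset.single_le_sum (f := fun j => euclNorm (latticeVec R (v j))) (fun j _ => euclNorm_nonneg _) (Finset.mem_univ j)⟩

lemma T_bddBelow {n i : ℕ} (A : Matrix (Fin n) (Fin n) ℝ) : BddBelow (T A i) :=
  ⟨0, fun _ hr => hr.1⟩

/-- Main comparison lemma. -/
lemma succMin_lt_succMin {n i : ℕ} (hi : 1 ≤ i) (hin : i ≤ n)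
    {G1 G2 R1 R2 : Matrix (Fin n) (Fin n) ℝ}
    (hG2 : G2.PosDef) (hdiff : (G1 - G2).PosDef)
    (hR1 : IsCholesky G1 R1) (hR2 : IsCholesky G2 R2) :
    succMin R2 i < succMin R1 i := by
  obtain ⟨c, hc, hcle⟩ := exists_ratio hdiff
  obtain ⟨δ, hδ, hlb⟩ := exists_quad_lb hG2
  have hcpos : (0 : ℝ) < c := lt_trans one_pos hc
  have hscpos : 0 < Real.sqrt c := Real.sqrt_pos.mpr hcpos
  have hT1ne : (T R1 i).Nonempty := T_nonempty hin hR1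
  have hT2ne : (T R2 i).Nonempty := T_nonempty hin hR2
  -- norm comparison: √c ⬝ ‖R2 z‖ ≤ ‖R1 z‖
  have hcmp : ∀ z : Fin n → ℤ,
      Real.sqrt c * euclNorm (latticeVec R2 z) ≤ euclNorm (latticeVec R1 z) := by
    intro z
    have hsq : (Real.sqrt c * euclNorm (latticeVec R2 z)) ^ 2 ≤
        euclNorm (latticeVec R1 z) ^ 2 := by
      have e1 := euclNorm_sq hR1 z
      have e2 := euclNorm_sq hR2 z
      have := hcle (fun k => ((z k : ℝ)))
      rw [← e1, ← e2] at this
      calc (Real.sqrt c * euclNorm (latticeVec R2 z)) ^ 2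
          = Real.sqrt c ^ 2 * euclNorm (latticeVec R2 z) ^ 2 := by ring
        _ = c * euclNorm (latticeVec R2 z) ^ 2 := by rw [Real.sq_sqrt hcpos.le]
        _ ≤ euclNorm (latticeVec R1 z) ^ 2 := this
    calc Real.sqrt c * euclNorm (latticeVec R2 z)
        = Real.sqrt ((Real.sqrt c * euclNorm (latticeVec R2 z)) ^ 2) :=
          (Real.sqrt_sq (mul_nonneg hscpos.le (euclNorm_nonneg _))).symm
      _ ≤ Real.sqrt (euclNorm (latticeVec R1 z) ^ 2) := Real.sqrt_le_sqrt hsq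
      _ = euclNorm (latticeVec R1 z) := Real.sqrt_sq (euclNorm_nonneg _)
  -- lower bound on sInf (T R2 i)
  have hpos : Real.sqrt δ ≤ sInf (T R2 i) := by
    refine le_csInf hT2ne fun r hr => ?_
    obtain ⟨hr0, v, li, hbd⟩ := hr
    set j0 : Fin i := ⟨0, hi⟩ with hj0
    have hne : latticeVec R2 (v j0) ≠ 0 := li.ne_zero j0
    have hzr : (fun k => ((v j0 k : ℝ))) ≠ 0 := by
      intro h
      exact hne (by rw [show latticeVec R2 (v j0) = R2 *ᵥ (fun k => ((v j0 k : ℝ))) from rfl,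
        h, Matrix.mulVec_zero])
    have hsum1 : (1 : ℝ) ≤ ∑ k, ((v j0 k : ℝ)) ^ 2 := by
      have : ∃ k, (v j0 k : ℝ) ≠ 0 := by
        by_contra h
        push_neg at h
        exact hzr (funext h)
      obtain ⟨k, hk⟩ := this
      have hkz : v j0 k ≠ 0 := fun h => hk (by rw [h]; simp)
      have h1 : (1 : ℝ) ≤ ((v j0 k : ℝ)) ^ 2 := by
        have := Int.one_le_abs hkz
        have h2 : (1 : ℝ) ≤ |(v j0 k : ℝ)| := by
          rw [← Int.cast_abs]
          exact_mod_cast this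
        calc (1 : ℝ) = 1 ^ 2 := by norm_num
          _ ≤ |(v j0 k : ℝ)| ^ 2 := by
              apply pow_le_pow_left₀ (by norm_num) h2
          _ = ((v j0 k : ℝ)) ^ 2 := sq_abs _
      exact le_trans h1 (Finset.single_le_sum (f := fun k => ((v j0 k : ℝ)) ^ 2) (fun j _ => sq_nonneg _) (Finset.mem_univ k))
    have hq : δ ≤ euclNorm (latticeVec R2 (v j0)) ^ 2 := by
      rw [euclNorm_sq hR2]
      calc δ = δ * 1 := by ring
        _ ≤ δ * ∑ k, ((v j0 k : ℝ)) ^ 2 := by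
            exact mul_le_mul_of_nonneg_left hsum1 hδ.le
        _ ≤ _ := hlb _
    have : Real.sqrt δ ≤ euclNorm (latticeVec R2 (v j0)) := by
      calc Real.sqrt δ ≤ Real.sqrt (euclNorm (latticeVec R2 (v j0)) ^ 2) :=
            Real.sqrt_le_sqrt hq
        _ = euclNorm (latticeVec R2 (v j0)) := Real.sqrt_sq (euclNorm_nonneg _)
    exact this.trans (hbd j0)
  -- key inequality: √c ⬝ sInf (T R2 i) ≤ sInf (T R1 i)
  have hkey : Real.sqrt c * sInf (T R2 i) ≤ sInf (T R1 i) := by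
    refine le_csInf hT1ne fun r hr => ?_
    obtain ⟨hr0, v, li, hbd⟩ := hr
    have hmem : r / Real.sqrt c ∈ T R2 i := by
      refine ⟨by positivity, v, li_transfer hR1 hR2 v li, fun j => ?_⟩
      rw [le_div_iff₀ hscpos]
      calc euclNorm (latticeVec R2 (v j)) * Real.sqrt c
          = Real.sqrt c * euclNorm (latticeVec R2 (v j)) := by ring
        _ ≤ euclNorm (latticeVec R1 (v j)) := hcmp (v j)
        _ ≤ r := hbd j
    have h1 : sInf (T R2 i) ≤ r / Real.sqrt c := csInf_le (T_bddBelow R2) hmem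
    calc Real.sqrt c * sInf (T R2 i) ≤ Real.sqrt c * (r / Real.sqrt c) :=
          mul_le_mul_of_nonneg_left h1 hscpos.le
      _ = r := by field_simp
  have h0 : 0 < sInf (T R2 i) := lt_of_lt_of_le (Real.sqrt_pos.mpr hδ) hpos
  have h1 : (1 : ℝ) < Real.sqrt c := by
    have := Real.sqrt_lt_sqrt zero_le_one hc
    simpa using this
  rw [succMin_eq, succMin_eq]
  calc sInf (T R2 i) = 1 * sInf (T R2 i) := (one_mul _).symm
    _ < Real.sqrt c * sInf (T R2 i) := by
        exact mul_lt_mul_of_pos_right h1 h0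
    _ ≤ sInf (T R1 i) := hkey

/-- Strict Loewner order is reversed by inversion. -/
lemma inv_sub_inv_posDef {n : ℕ} {G1 G2 : Matrix (Fin n) (Fin n) ℝ}
    (hG1 : G1.PosDef) (hG2 : G2.PosDef) (hdiff : (G1 - G2).PosDef) :
    (G2⁻¹ - G1⁻¹).PosDef := by
  have h1u : IsUnit G1.det := isUnit_iff_ne_zero.mpr hG1.det_pos.ne'
  have h2u : IsUnit G2.det := isUnit_iff_ne_zero.mpr hG2.det_pos.ne'
  have hsym2 : ∀ a b : Fin n → ℝ, a ⬝ᵥ (G2 *ᵥ b) = b ⬝ᵥ (G2 *ᵥ a) := by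
    intro a b
    have ht : G2ᵀ = G2 := by
      have := hG2.isHermitian
      simpa [Matrix.IsHermitian, Matrix.conjTranspose_eq_transpose_of_trivial] using this
    rw [Matrix.dotProduct_mulVec, ← ht, Matrix.vecMul_transpose, dotProduct_comm, ht]
  refine Matrix.PosDef.of_dotProduct_mulVec_pos ((hG2.inv.isHermitian).sub (hG1.inv.isHermitian)) fun x hx => ?_
  set y := G1⁻¹ *ᵥ x with hy
  have hG1y : G1 *ᵥ y = x := by
    rw [hy, Matrix.mulVec_mulVec, Matrix.mul_nonsing_inv _ h1u, Matrix.one_mulVec]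
  have hyne : y ≠ 0 := fun h => hx (by rw [← hG1y, h, Matrix.mulVec_zero])
  have hG2w : G2 *ᵥ (G2⁻¹ *ᵥ x) = x := by
    rw [Matrix.mulVec_mulVec, Matrix.mul_nonsing_inv _ h2u, Matrix.one_mulVec]
  have hw : (0:ℝ) ≤ (y - G2⁻¹ *ᵥ x) ⬝ᵥ (G2 *ᵥ (y - G2⁻¹ *ᵥ x)) := by
    have := hG2.posSemidef.dotProduct_mulVec_nonneg (y - G2⁻¹ *ᵥ x)
    simpa using this
  have expand : (y - G2⁻¹ *ᵥ x) ⬝ᵥ (G2 *ᵥ (y - G2⁻¹ *ᵥ x)) =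
      y ⬝ᵥ (G2 *ᵥ y) - 2 * (x ⬝ᵥ y) + x ⬝ᵥ (G2⁻¹ *ᵥ x) := by
    rw [Matrix.mulVec_sub, dotProduct_sub, sub_dotProduct, sub_dotProduct,
      hG2w, hsym2 (G2⁻¹ *ᵥ x) y, hG2w]
    rw [dotProduct_comm (G2⁻¹ *ᵥ x) x, dotProduct_comm y x]
    ring
  have hq2 : y ⬝ᵥ (G2 *ᵥ y) < y ⬝ᵥ (G1 *ᵥ y) := by
    have := hdiff.dotProduct_mulVec_pos hyne
    simp only [star_trivial, Matrix.sub_mulVec, dotProduct_sub] at this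
    linarith
  have key2 : y ⬝ᵥ (G1 *ᵥ y) = x ⬝ᵥ y := by rw [hG1y]; exact dotProduct_comm y x
  have goal' : 0 < x ⬝ᵥ (G2⁻¹ *ᵥ x) - x ⬝ᵥ (G1⁻¹ *ᵥ x) := by
    have hxy : x ⬝ᵥ (G1⁻¹ *ᵥ x) = x ⬝ᵥ y := by rw [hy]
    linarith [hw, expand, hq2, key2, hxy]
  have hfin : star x ⬝ᵥ ((G2⁻¹ - G1⁻¹) *ᵥ x) =
      x ⬝ᵥ (G2⁻¹ *ᵥ x) - x ⬝ᵥ (G1⁻¹ *ᵥ x) := by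
    simp [Matrix.sub_mulVec, dotProduct_sub]
  rw [hfin]
  exact goal'

end SMAux

theorem statement5 {n : ℕ} (G1 G2 : Matrix (Fin n) (Fin n) ℝ)
    (hG1 : G1.PosDef) (hG2 : G2.PosDef) (hdiff : (G1 - G2).PosDef)
    (R1 R2 Rh1 Rh2 : Matrix (Fin n) (Fin n) ℝ)
    (hR1 : IsCholesky G1 R1) (hR2 : IsCholesky G2 R2)
    (hRh1 : IsCholesky G1⁻¹ Rh1) (hRh2 : IsCholesky G2⁻¹ Rh2) :
    ∀ i : ℕ, 1 ≤ i → i ≤ n →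
      succMin R2 i < succMin R1 i ∧ succMin Rh1 i < succMin Rh2 i := by
  intro i hi hin
  constructor
  · exact SMAux.succMin_lt_succMin hi hin hG2 hdiff hR1 hR2
  · exact SMAux.succMin_lt_succMin hi hin hG1.inv
      (SMAux.inv_sub_inv_posDef hG1 hG2 hdiff) hRh2 hRh1
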